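/- If α·d > 2n·log(d)/(log 4 − 1), then nd·(e/4)^{α d^{n-1}/2} ≤ n·d^{1 − n·d^{n-2}}, so a Bernoulli(α/2) random tensor S ∈ ℝ^{d×⋯×d} (n modes, n ≥ 2, d ≥ 2) is α-T-sparse with probability at least 1 − n·d^{1 − n d^{n-2}}. -/

import Mathlib

open MeasureTheory ENNReal


lemma measAll_aux {n d : ℕ} (s : Set ((Fin n → Fin d) → Bool)) : MeasurableSet s := by
  classical
  have h1 : ∀ x : (Fin n → Fin d) → Bool, MeasurableSet {x} := by
    intro x
    have hx : ({x} : Set ((Fin n → Fin d) → Bool)) = ⋂ i, (fun f => f i) ⁻¹' {x i} := by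
      ext f; simp [funext_iff, Set.mem_iInter, eq_comm]
    rw [hx]
    exact MeasurableSet.iInter fun i => measurable_pi_apply i (MeasurableSet.singleton _)
  have hs : s = ⋃ x ∈ s, {x} := by simp
  rw [hs]
  exact MeasurableSet.biUnion (Set.to_countable s) fun x _ => h1 x

lemma slice_card {n d : ℕ} (j : Fin n) (k : Fin d) :
    (Finset.univ.filter fun i : Fin n → Fin d => i j = k).card = d ^ (n - 1) := by
  classical
  rw [← Fintype.card_subtype]
  have e : {i : Fin n → Fin d // i j = k} ≃ ({m : Fin n // m ≠ j} → Fin d) :=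
    { toFun := fun f m => f.1 m.1
      invFun := fun g => ⟨fun m => if h : m = j then k else g ⟨m, h⟩, by simp⟩
      left_inv := by
        rintro ⟨f, hf⟩
        apply Subtype.ext
        funext m
        dsimp
        split_ifs with h
        · subst h; exact hf.symm
        · rfl
      right_inv := by intro g; funext m; simp [m.2] }
  rw [Fintype.card_congr e, Fintype.card_fun]
  have : Fintype.card {m : Fin n // m ≠ j} = n - 1 := by
    have := Fintype.card_subtype_compl (fun m : Fin n => m = j)
    simp only [Fintype.card_subtype_eq, Fintype.card_fin] at this
    exact this
  rw [this, Fintype.card_fin]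

lemma sum_prod_bool_aux {ι : Type*} [Fintype ι] [DecidableEq ι] (f : ι → Bool → ℝ≥0∞) :
    ∑ S : ι → Bool, ∏ i, f i (S i) = ∏ i, ∑ b : Bool, f i b := by
  rw [Finset.prod_univ_sum]
  rw [Fintype.piFinset_univ]


lemma part1_ineq {n d : ℕ} (hn : 2 ≤ n) (hd : 2 ≤ d)
    (α : ℝ) (hα0 : 0 < α)
    (hαd : 2 * n * Real.log d / (Real.log 4 - 1) < α * d) :
    (n : ℝ) * d * (Real.exp 1 / 4) ^ (α * (d : ℝ) ^ (n - 1) / 2) ≤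
      (n : ℝ) * (d : ℝ) ^ ((1 : ℝ) - n * (d : ℝ) ^ (n - 2)) := by
  have hd0 : (0:ℝ) < d := by positivity
  have hn0 : (0:ℝ) < n := by positivity
  have hL : 0 < Real.log 4 - 1 := by
    have h4 : Real.exp 1 < 4 := by have := Real.exp_one_lt_d9; linarith
    have h1 : (1:ℝ) < Real.log 4 := by
      have := Real.log_lt_log (Real.exp_pos 1) h4
      rwa [Real.log_exp] at this
    linarith
  have hM : (0:ℝ) < (d:ℝ) ^ (n - 2) := pow_pos hd0 _
  have hlogd : 0 < Real.log d := Real.log_pos (by exact_mod_cast hd)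
  have hpow : (d:ℝ) ^ (n - 1) = (d:ℝ) ^ (n - 2) * d := by
    rw [← pow_succ]
    congr 1
    omega
  have h1 : 2 * n * Real.log d < α * d * (Real.log 4 - 1) := by
    rw [div_lt_iff₀ hL] at hαd
    linarith
  have hkey : (n:ℝ) * (d:ℝ) ^ (n - 2) * Real.log d ≤
      (Real.log 4 - 1) * (α * (d:ℝ) ^ (n - 1) / 2) := by
    rw [hpow]
    nlinarith [mul_lt_mul_of_pos_right h1 hM]
  have hed4 : (0:ℝ) < Real.exp 1 / 4 := by positivity
  have hrpow : (Real.exp 1 / 4) ^ (α * (d : ℝ) ^ (n - 1) / 2) ≤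
      (d:ℝ) ^ (-((n:ℝ) * (d:ℝ) ^ (n - 2))) := by
    rw [Real.rpow_def_of_pos hed4, Real.rpow_def_of_pos hd0]
    apply Real.exp_le_exp.2
    have hlog : Real.log (Real.exp 1 / 4) = 1 - Real.log 4 := by
      rw [Real.log_div (Real.exp_ne_zero 1) (by norm_num), Real.log_exp]
    rw [hlog]
    nlinarith [hkey]
  have hsplit : (d:ℝ) ^ ((1:ℝ) - n * (d:ℝ) ^ (n - 2)) =
      d * (d:ℝ) ^ (-((n:ℝ) * (d:ℝ) ^ (n - 2))) := by
    rw [show (1:ℝ) - n * (d:ℝ) ^ (n - 2) = 1 + (-((n:ℝ) * (d:ℝ) ^ (n - 2))) by ring,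
      Real.rpow_add hd0, Real.rpow_one]
  rw [hsplit, ← mul_assoc]
  exact mul_le_mul_of_nonneg_left hrpow (by positivity)

lemma slice_chernoff {n d : ℕ} (hn : 2 ≤ n) (hd : 2 ≤ d)
    (α : ℝ) (hα0 : 0 < α) (hα1 : α < 1)
    (sc : ∀ (j : Fin n) (k : Fin d),
      (Finset.univ.filter fun i : Fin n → Fin d => i j = k).card = d ^ (n - 1))
    (μ : Measure ((Fin n → Fin d) → Bool))
    (hμ : μ = Measure.pi fun _ : Fin n → Fin d =>
      (PMF.bernoulli (Real.toNNReal (α / 2))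
        (by rw [Real.toNNReal_le_one]; linarith)).toMeasure) (j : Fin n) (k : Fin d) :
    μ {S : (Fin n → Fin d) → Bool | α * (d:ℝ) ^ (n-1) <
        ((Finset.univ.filter fun idx : Fin n → Fin d => idx j = k ∧ S idx = true).card : ℝ)}
      ≤ ENNReal.ofReal ((Real.exp 1 / 4) ^ (α * (d:ℝ) ^ (n-1) / 2)) := by
  classical
  set p : ℝ≥0∞ := ENNReal.ofReal (α / 2) with hp
  have hple : p ≤ 1 := by rw [hp, ENNReal.ofReal_le_one]; linarith
  -- singleton measures
  have hsingle : ∀ S : (Fin n → Fin d) → Bool,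
      μ {S} = ∏ i : Fin n → Fin d, (if S i then p else 1 - p) := by
    intro S
    rw [hμ, ← Set.univ_pi_singleton S, Measure.pi_pi]
    refine Finset.prod_congr rfl fun i _ => ?_
    rw [PMF.toMeasure_apply_singleton _ _ (measurableSet_singleton _), PMF.bernoulli_apply]
    cases hSi : S i <;> simp <;> rfl
  set c : ((Fin n → Fin d) → Bool) → ℕ :=
    fun S => (Finset.univ.filter fun idx : Fin n → Fin d => idx j = k ∧ S idx = true).card with hc
  -- the generating-function identity
  have hsum : ∑ S : (Fin n → Fin d) → Bool, (2:ℝ≥0∞) ^ (c S) * μ {S}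
      = (1 + p) ^ (d ^ (n-1)) := by
    have hterm : ∀ S : (Fin n → Fin d) → Bool,
        (2:ℝ≥0∞) ^ (c S) * μ {S}
          = ∏ i : Fin n → Fin d,
              ((if i j = k ∧ S i = true then (2:ℝ≥0∞) else 1) * (if S i then p else 1 - p)) := by
      intro S
      rw [hsingle S, Finset.prod_mul_distrib]
      congr 1
      rw [Finset.prod_ite, Finset.prod_const, Finset.prod_const, one_pow, mul_one, hc]
    simp_rw [hterm]
    rw [sum_prod_bool_aux (fun (i : Fin n → Fin d) (b : Bool) => (if i j = k ∧ b = true then (2:ℝ≥0∞) else 1) * (if b then p else 1 - p))]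
    have hfac : ∀ i : Fin n → Fin d,
        (∑ b : Bool, (if i j = k ∧ b = true then (2:ℝ≥0∞) else 1) * (if b then p else 1 - p))
          = if i j = k then 1 + p else 1 := by
      intro i
      rw [Fintype.sum_bool]
      by_cases h : i j = k
      · simp only [h, true_and, if_true, if_false, and_false]
        calc 2 * p + 1 * (1 - p) = p + (p + (1 - p)) := by rw [two_mul, one_mul, add_assoc]
        _ = p + 1 := by rw [add_tsub_cancel_of_le hple]
        _ = 1 + p := add_comm _ _
      · simp only [h, false_and, if_false, if_true, one_mul]
        rw [if_neg Bool.false_ne_true, add_tsub_cancel_of_le hple]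
    simp_rw [hfac]
    rw [Finset.prod_ite, Finset.prod_const, Finset.prod_const, one_pow, mul_one, sc j k]
  -- Markov
  set a : ℝ≥0∞ := (2:ℝ≥0∞) ^ (α * (d:ℝ) ^ (n-1)) with ha
  have ha0 : a ≠ 0 := by
    rw [ha]; exact (ENNReal.rpow_pos (by norm_num) (by norm_num)).ne'
  have hat : a ≠ ⊤ := by
    rw [ha]; exact ENNReal.rpow_ne_top_of_nonneg (by positivity) (by norm_num)
  set F : Finset ((Fin n → Fin d) → Bool) :=
    Finset.univ.filter (fun S => α * (d:ℝ) ^ (n-1) < (c S : ℝ)) with hF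
  have hMarkov : a * μ {S : (Fin n → Fin d) → Bool | α * (d:ℝ) ^ (n-1) < ((c S : ℕ) : ℝ)}
      ≤ (1 + p) ^ (d ^ (n-1)) := by
    have h1 : μ {S : (Fin n → Fin d) → Bool | α * (d:ℝ) ^ (n-1) < ((c S : ℕ) : ℝ)}
        ≤ ∑ S ∈ F, μ {S} := by
      refine (measure_mono ?_).trans (measure_biUnion_finset_le F fun S => {S})
      intro S hS
      simp only [Set.mem_setOf_eq] at hS
      exact Set.mem_biUnion (by rw [hF]; exact Finset.mem_filter.mpr ⟨Finset.mem_univ _, hS⟩) rfl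
    calc a * μ _ ≤ a * ∑ S ∈ F, μ {S} := mul_le_mul_right h1 a
    _ = ∑ S ∈ F, a * μ {S} := Finset.mul_sum _ _ _
    _ ≤ ∑ S ∈ F, (2:ℝ≥0∞) ^ (c S) * μ {S} := by
        refine Finset.sum_le_sum fun S hS => ?_
        refine mul_le_mul_left ?_ _
        rw [hF, Finset.mem_filter] at hS
        have h2 : a ≤ (2:ℝ≥0∞) ^ ((c S : ℝ)) :=
          ENNReal.rpow_le_rpow_of_exponent_le one_le_two hS.2.le
        rwa [ENNReal.rpow_natCast] at h2
    _ ≤ ∑ S : (Fin n → Fin d) → Bool, (2:ℝ≥0∞) ^ (c S) * μ {S} :=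
        Finset.sum_le_sum_of_subset (Finset.subset_univ F)
    _ = (1 + p) ^ (d ^ (n-1)) := hsum
  have h2 : μ {S : (Fin n → Fin d) → Bool | α * (d:ℝ) ^ (n-1) < ((c S : ℕ) : ℝ)}
      ≤ (1 + p) ^ (d ^ (n-1)) / a := by
    rw [ENNReal.le_div_iff_mul_le (Or.inl ha0) (Or.inl hat), mul_comm]
    exact hMarkov
  refine h2.trans ?_
  -- convert to reals
  have hp_eq : (1:ℝ≥0∞) + p = ENNReal.ofReal (1 + α/2) := by
    rw [ENNReal.ofReal_add (by norm_num) (by linarith), ENNReal.ofReal_one]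
  have ha_eq : a = ENNReal.ofReal ((2:ℝ) ^ (α * (d:ℝ) ^ (n-1))) := by
    rw [ha, show (2:ℝ≥0∞) = ENNReal.ofReal (2:ℝ) from (ENNReal.ofReal_ofNat 2).symm,
      ENNReal.ofReal_rpow_of_pos (by norm_num)]
  rw [hp_eq, ha_eq, ← ENNReal.ofReal_pow (by linarith),
    ← ENNReal.ofReal_div_of_pos (Real.rpow_pos_of_pos (by norm_num) _)]
  apply ENNReal.ofReal_le_ofReal
  -- the real Chernoff computation
  have hNcast : ((d ^ (n-1) : ℕ) : ℝ) = (d:ℝ) ^ (n-1) := by push_cast; ring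
  have hexp : ((1:ℝ) + α/2) ^ (d ^ (n-1) : ℕ) ≤ Real.exp (α * (d:ℝ) ^ (n-1) / 2) := by
    have hle : (1:ℝ) + α/2 ≤ Real.exp (α/2) := by
      have := Real.add_one_le_exp (α/2); linarith
    calc ((1:ℝ) + α/2) ^ (d ^ (n-1) : ℕ) ≤ (Real.exp (α/2)) ^ (d ^ (n-1) : ℕ) :=
          pow_le_pow_left₀ (by linarith) hle _
    _ = Real.exp (((d ^ (n-1) : ℕ) : ℝ) * (α/2)) := by rw [Real.exp_nat_mul]
    _ = Real.exp (α * (d:ℝ) ^ (n-1) / 2) := by rw [hNcast]; ring_nf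
  have h4 : (Real.exp 1 / 4) ^ (α * (d:ℝ) ^ (n-1) / 2)
      = Real.exp (α * (d:ℝ) ^ (n-1) / 2) / (2:ℝ) ^ (α * (d:ℝ) ^ (n-1)) := by
    rw [Real.div_rpow (Real.exp_pos 1).le (by norm_num), Real.exp_one_rpow]
    congr 1
    rw [show (4:ℝ) = (2:ℝ) ^ ((2:ℕ) : ℝ) by rw [Real.rpow_natCast]; norm_num,
      ← Real.rpow_mul (by norm_num)]
    congr 1
    push_cast
    ring
  rw [h4]
  gcongr

/-- A tensor `S ∈ ℝ^{d × ⋯ × d}` with `n` modes (boolean-valued, marking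
nonzero entries) is `α`-T-sparse if every slice along every mode has at most
`α d^{n-1}` nonzero entries. -/
def TSparse (n d : ℕ) (α : ℝ) (S : (Fin n → Fin d) → Bool) : Prop :=
  ∀ (j : Fin n) (k : Fin d),
    ((Finset.univ.filter
      fun idx : Fin n → Fin d => idx j = k ∧ S idx = true).card : ℝ) ≤
      α * (d : ℝ) ^ (n - 1)

/-- If `α d > 2n log d / (log 4 − 1)`, then
`nd (e/4)^{α d^{n-1}/2} ≤ n d^{1 − n d^{n-2}}`, so a Bernoulli(α/2) random
tensor `S ∈ ℝ^{d × ⋯ × d}` (`n ≥ 2` modes, `d ≥ 2`) is `α`-T-sparse with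
probability at least `1 − n d^{1 − n d^{n-2}}`. -/
theorem TSparse_whp {n d : ℕ} (hn : 2 ≤ n) (hd : 2 ≤ d)
    (α : ℝ) (hα0 : 0 < α) (hα1 : α < 1)
    (hαd : 2 * n * Real.log d / (Real.log 4 - 1) < α * d)
    (μ : Measure ((Fin n → Fin d) → Bool))
    (hμ : μ = Measure.pi fun _ : Fin n → Fin d =>
      (PMF.bernoulli (Real.toNNReal (α / 2))
        (by rw [Real.toNNReal_le_one]; linarith)).toMeasure) :
    (n : ℝ) * d * (Real.exp 1 / 4) ^ (α * (d : ℝ) ^ (n - 1) / 2) ≤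
        (n : ℝ) * (d : ℝ) ^ ((1 : ℝ) - n * (d : ℝ) ^ (n - 2)) ∧
      1 - ENNReal.ofReal ((n : ℝ) * (d : ℝ) ^ ((1 : ℝ) - n * (d : ℝ) ^ (n - 2)))
          ≤ μ {S | TSparse n d α S} := by
  classical
  subst hμ
  set μ : Measure ((Fin n → Fin d) → Bool) := Measure.pi fun _ : Fin n → Fin d =>
      (PMF.bernoulli (Real.toNNReal (α / 2))
        (by rw [Real.toNNReal_le_one]; linarith)).toMeasure with hμ
  have part1 := part1_ineq hn hd α hα0 hαd
  refine ⟨part1, ?_⟩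
  set q : ℝ≥0∞ := ENNReal.ofReal ((Real.exp 1 / 4) ^ (α * (d:ℝ) ^ (n-1) / 2)) with hq
  have hslice : ∀ (j : Fin n) (k : Fin d),
      μ {S : (Fin n → Fin d) → Bool | α * (d:ℝ) ^ (n-1) <
        ((Finset.univ.filter fun idx : Fin n → Fin d => idx j = k ∧ S idx = true).card : ℝ)} ≤ q :=
    fun j k => slice_chernoff hn hd α hα0 hα1 (fun j k => slice_card j k) μ hμ j k
  have hcover : {S | TSparse n d α S}ᶜ ⊆ ⋃ j : Fin n, ⋃ k : Fin d,
      {S : (Fin n → Fin d) → Bool | α * (d:ℝ) ^ (n-1) <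
        ((Finset.univ.filter fun idx : Fin n → Fin d => idx j = k ∧ S idx = true).card : ℝ)} := by
    intro S hS
    simp only [Set.mem_compl_iff, Set.mem_setOf_eq, TSparse, not_forall, not_le] at hS
    obtain ⟨j, k, h⟩ := hS
    exact Set.mem_iUnion.2 ⟨j, Set.mem_iUnion.2 ⟨k, h⟩⟩
  have hunion : μ ({S | TSparse n d α S}ᶜ) ≤ (n : ℝ≥0∞) * ((d : ℝ≥0∞) * q) := by
    refine (measure_mono hcover).trans ?_
    refine (measure_iUnion_le _).trans ?_
    rw [tsum_fintype]
    calc ∑ j : Fin n, μ (⋃ k : Fin d, _) ≤ ∑ j : Fin n, ∑ k : Fin d,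
          μ {S : (Fin n → Fin d) → Bool | α * (d:ℝ) ^ (n-1) <
            ((Finset.univ.filter fun idx : Fin n → Fin d => idx j = k ∧ S idx = true).card : ℝ)} := by
          refine Finset.sum_le_sum fun j _ => ?_
          refine (measure_iUnion_le _).trans ?_
          rw [tsum_fintype]
    _ ≤ ∑ _j : Fin n, ∑ _k : Fin d, q :=
          Finset.sum_le_sum fun j _ => Finset.sum_le_sum fun k _ => hslice j k
    _ = (n : ℝ≥0∞) * ((d : ℝ≥0∞) * q) := by
          simp [Finset.sum_const, Finset.card_univ, nsmul_eq_mul, mul_assoc]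
  have hnd : (n : ℝ≥0∞) * ((d : ℝ≥0∞) * q) =
      ENNReal.ofReal ((n:ℝ) * d * (Real.exp 1 / 4) ^ (α * (d:ℝ) ^ (n-1) / 2)) := by
    rw [hq, ← ENNReal.ofReal_natCast n, ← ENNReal.ofReal_natCast d,
      ← ENNReal.ofReal_mul (by positivity), ← ENNReal.ofReal_mul (by positivity)]
    rw [mul_assoc]
  have hfinal : μ ({S | TSparse n d α S}ᶜ) ≤
      ENNReal.ofReal ((n:ℝ) * (d:ℝ) ^ ((1:ℝ) - n * (d:ℝ) ^ (n-2))) :=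
    hunion.trans (by rw [hnd]; exact ENNReal.ofReal_le_ofReal part1)
  haveI : IsProbabilityMeasure μ := by rw [hμ]; infer_instance
  have hμs : μ {S | TSparse n d α S} = 1 - μ ({S | TSparse n d α S}ᶜ) := by
    conv_lhs => rw [← compl_compl {S | TSparse n d α S}]
    exact prob_compl_eq_one_sub (measAll_aux _)
  rw [hμs]
  exact tsub_le_tsub_left hfinal 1
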